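/- The bivariate degenerate Hermite polynomials satisfy the generalized heat equation: ∂/∂y H_n(x,y|λ) = (λ/log(1+λ)) · ∂²/∂x² H_n(x,y|λ), with initial condition H_n(x,0|λ) = (log(1+λ)/λ)ⁿ xⁿ. -/

import Mathlib

open Real Finset MeasureTheory

noncomputable def dH (l x y : ℝ) (n : ℕ) : ℝ :=
  ∑ k ∈ Finset.range (n / 2 + 1),
    (Nat.factorial n : ℝ) / ((Nat.factorial (n - 2 * k) : ℝ) * (Nat.factorial k : ℝ)) *
      (Real.log (1 + l) / l) ^ (n - k) * x ^ (n - 2 * k) * y ^ k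

theorem stmt1 (l : ℝ) (hl : 0 < l) (n : ℕ) :
    (∀ x y : ℝ, deriv (fun y' => dH l x y' n) y =
      (l / Real.log (1 + l)) * iteratedDeriv 2 (fun x' => dH l x' y n) x) ∧
    ∀ x : ℝ, dH l x 0 n = (Real.log (1 + l) / l) ^ n * x ^ n := by
  have hlog : 0 < Real.log (1 + l) := Real.log_pos (by linarith)
  have hl0 : l ≠ 0 := ne_of_gt hl
  have hlog0 : Real.log (1 + l) ≠ 0 := ne_of_gt hlog
  set L : ℝ := Real.log (1 + l) / l with hLdef
  constructor
  · intro x y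
    -- derivative in y
    have hdy : deriv (fun y' => dH l x y' n) y
        = ∑ k ∈ Finset.range (n / 2 + 1),
            (Nat.factorial n : ℝ) / ((Nat.factorial (n - 2 * k) : ℝ) * (Nat.factorial k : ℝ)) *
              L ^ (n - k) * x ^ (n - 2 * k) * (k * y ^ (k - 1)) := by
      unfold dH
      rw [deriv_fun_sum (fun i _ => by fun_prop)]
      refine Finset.sum_congr rfl fun k _ => ?_
      rw [deriv_const_mul_field, deriv_pow_field]
    -- first derivative in x, as a function
    have hdx : deriv (fun x' => dH l x' y n)
        = fun x' => ∑ k ∈ Finset.range (n / 2 + 1),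
            (Nat.factorial n : ℝ) / ((Nat.factorial (n - 2 * k) : ℝ) * (Nat.factorial k : ℝ)) *
              L ^ (n - k) * ((n - 2 * k : ℕ) * x' ^ (n - 2 * k - 1)) * y ^ k := by
      funext x'
      unfold dH
      rw [deriv_fun_sum (fun i _ => by fun_prop)]
      refine Finset.sum_congr rfl fun k _ => ?_
      have : (fun x' : ℝ => (Nat.factorial n : ℝ) / ((Nat.factorial (n - 2 * k) : ℝ) *
            (Nat.factorial k : ℝ)) * L ^ (n - k) * x' ^ (n - 2 * k) * y ^ k)
          = fun x' : ℝ => ((Nat.factorial n : ℝ) / ((Nat.factorial (n - 2 * k) : ℝ) *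
            (Nat.factorial k : ℝ)) * L ^ (n - k) * y ^ k) * x' ^ (n - 2 * k) := by
        funext t; ring
      rw [this, deriv_const_mul_field, deriv_pow_field]
      ring
    have hdx2 : iteratedDeriv 2 (fun x' => dH l x' y n) x
        = ∑ k ∈ Finset.range (n / 2 + 1),
            (Nat.factorial n : ℝ) / ((Nat.factorial (n - 2 * k) : ℝ) * (Nat.factorial k : ℝ)) *
              L ^ (n - k) * ((n - 2 * k : ℕ) * ((n - 2 * k - 1 : ℕ) * x ^ (n - 2 * k - 2))) * y ^ k := by
      rw [show (2:ℕ) = 1 + 1 from rfl, iteratedDeriv_succ, iteratedDeriv_one, hdx]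
      rw [deriv_fun_sum (fun i _ => by fun_prop)]
      refine Finset.sum_congr rfl fun k _ => ?_
      have : (fun x' : ℝ => (Nat.factorial n : ℝ) / ((Nat.factorial (n - 2 * k) : ℝ) *
            (Nat.factorial k : ℝ)) * L ^ (n - k) * ((n - 2 * k : ℕ) * x' ^ (n - 2 * k - 1)) * y ^ k)
          = fun x' : ℝ => ((Nat.factorial n : ℝ) / ((Nat.factorial (n - 2 * k) : ℝ) *
            (Nat.factorial k : ℝ)) * L ^ (n - k) * (n - 2 * k : ℕ) * y ^ k) * x' ^ (n - 2 * k - 1) := by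
        funext t; ring
      rw [this, deriv_const_mul_field, deriv_pow_field]
      have : n - 2 * k - 1 - 1 = n - 2 * k - 2 := by omega
      rw [this]; ring
    rw [hdy, hdx2, Finset.mul_sum, Finset.sum_range_succ' _ (n / 2),
      Finset.sum_range_succ]
    have hzero1 : (Nat.factorial n : ℝ) / ((Nat.factorial (n - 2 * 0) : ℝ) * (Nat.factorial 0 : ℝ)) *
        L ^ (n - 0) * x ^ (n - 2 * 0) * ((0:ℕ) * y ^ (0 - 1)) = 0 := by simp
    have hzero2 : l / Real.log (1 + l) *
        ((Nat.factorial n : ℝ) / ((Nat.factorial (n - 2 * (n / 2)) : ℝ) * (Nat.factorial (n / 2) : ℝ)) *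
          L ^ (n - n / 2) * ((n - 2 * (n / 2) : ℕ) * ((n - 2 * (n / 2) - 1 : ℕ) * x ^ (n - 2 * (n / 2) - 2))) *
          y ^ (n / 2)) = 0 := by
      rcases Nat.even_or_odd n with ⟨m, hm⟩ | ⟨m, hm⟩
      · have : n - 2 * (n / 2) = 0 := by omega
        rw [this]; simp
      · have : n - 2 * (n / 2) - 1 = 0 := by omega
        rw [this]
        have h2 : n - 2 * (n / 2) = 1 := by omega
        rw [h2]; simp
    rw [hzero1, hzero2, add_zero, add_zero]
    refine Finset.sum_congr rfl fun k hk => ?_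
    have hk' : k < n / 2 := Finset.mem_range.mp hk
    have h2 : 2 * k + 2 ≤ n := by omega
    obtain ⟨m, hm⟩ : ∃ m, n = 2 * k + 2 + m := ⟨n - (2 * k + 2), by omega⟩
    have e1 : n - 2 * (k + 1) = m := by omega
    have e2 : n - (k + 1) = k + m + 1 := by omega
    have e3 : n - 2 * k = m + 2 := by omega
    have e4 : n - 2 * k - 1 = m + 1 := by omega
    have e5 : n - 2 * k - 2 = m := by omega
    have e6 : n - k = k + m + 2 := by omega
    rw [e5, e4, e3, e1, e2, e6]
    have hfm : ((m.factorial : ℝ)) ≠ 0 := Nat.cast_ne_zero.mpr (Nat.factorial_ne_zero _)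
    have hfk : ((k.factorial : ℝ)) ≠ 0 := Nat.cast_ne_zero.mpr (Nat.factorial_ne_zero _)
    simp only [Nat.add_sub_cancel, Nat.factorial_succ, Nat.cast_mul, Nat.cast_add, Nat.cast_ofNat,
      Nat.cast_one, pow_succ, hLdef]
    field_simp
    ring
  · intro x
    unfold dH
    rw [Finset.sum_eq_single 0]
    · have hfn : ((n.factorial : ℝ)) ≠ 0 := Nat.cast_ne_zero.mpr (Nat.factorial_ne_zero _)
      simp [div_self hfn, hLdef]
    · intro k _ hk
      rw [zero_pow hk, mul_zero]
    · intro h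
      exact absurd (Finset.mem_range.mpr (Nat.succ_pos _)) h
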